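/- Let Φ be an irreducible, positive, trace preserving linear map on M_n(ℂ) with invariant state π, and let Ω(X) = Tr(X)·π. Then the linear map I − Φ + Ω on M_n(ℂ) is invertible (where I is the identity map on M_n(ℂ)). -/

import Mathlib

open Matrix ComplexOrder

variable {n : ℕ} {A : Matrix (Fin n) (Fin n) ℂ}

noncomputable def cdiag (hA : A.IsHermitian) (g : Fin n → ℝ) : Matrix (Fin n) (Fin n) ℂ :=
  (hA.eigenvectorUnitary : Matrix (Fin n) (Fin n) ℂ) * diagonal (fun i => (g i : ℂ)) *
    star (hA.eigenvectorUnitary : Matrix (Fin n) (Fin n) ℂ)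

lemma star_V_mul_V (hA : A.IsHermitian) :
    star (hA.eigenvectorUnitary : Matrix (Fin n) (Fin n) ℂ) *
      (hA.eigenvectorUnitary : Matrix (Fin n) (Fin n) ℂ) = 1 :=
  (Matrix.mem_unitaryGroup_iff').mp hA.eigenvectorUnitary.2

lemma V_mul_star_V (hA : A.IsHermitian) :
    (hA.eigenvectorUnitary : Matrix (Fin n) (Fin n) ℂ) *
      star (hA.eigenvectorUnitary : Matrix (Fin n) (Fin n) ℂ) = 1 :=
  (Matrix.mem_unitaryGroup_iff).mp hA.eigenvectorUnitary.2

lemma cdiag_mul (hA : A.IsHermitian) (f g : Fin n → ℝ) :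
    cdiag hA f * cdiag hA g = cdiag hA (f * g) := by
  unfold cdiag
  set V := (hA.eigenvectorUnitary : Matrix (Fin n) (Fin n) ℂ) with hV
  simp only [← mul_assoc]
  rw [mul_assoc (V * _) (star V) V, star_V_mul_V, mul_one,
    mul_assoc V _ _, diagonal_mul_diagonal]
  congr 1
  ext i j
  by_cases h : i = j <;> simp [diagonal_apply, h]

lemma cdiag_add (hA : A.IsHermitian) (f g : Fin n → ℝ) :
    cdiag hA f + cdiag hA g = cdiag hA (f + g) := by
  unfold cdiag
  rw [← add_mul, ← mul_add]
  congr 2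
  ext i j
  by_cases h : i = j <;> simp [diagonal_apply, h]

lemma cdiag_sub (hA : A.IsHermitian) (f g : Fin n → ℝ) :
    cdiag hA f - cdiag hA g = cdiag hA (f - g) := by
  unfold cdiag
  rw [← sub_mul, ← mul_sub]
  congr 2
  ext i j
  by_cases h : i = j <;> simp [diagonal_apply, h]

lemma cdiag_smul (hA : A.IsHermitian) (r : ℝ) (g : Fin n → ℝ) :
    (r : ℂ) • cdiag hA g = cdiag hA (r • g) := by
  unfold cdiag
  rw [← smul_mul_assoc, ← mul_smul_comm]
  congr 2
  ext i j
  by_cases h : i = j <;> simp [diagonal_apply, h]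

lemma cdiag_one (hA : A.IsHermitian) : cdiag hA 1 = 1 := by
  unfold cdiag
  simp [V_mul_star_V hA]

lemma cdiag_zero (hA : A.IsHermitian) : cdiag hA 0 = 0 := by
  unfold cdiag; simp

lemma cdiag_eigenvalues (hA : A.IsHermitian) : cdiag hA hA.eigenvalues = A := by
  conv_rhs => rw [hA.spectral_theorem]
  rfl

lemma cdiag_isHermitian (hA : A.IsHermitian) (g : Fin n → ℝ) : (cdiag hA g).IsHermitian := by
  have hD : (diagonal fun i => ((g i : ℂ)))ᴴ = diagonal fun i => ((g i : ℂ)) := by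
    rw [diagonal_conjTranspose]
    simp [Pi.star_def, Complex.conj_ofReal]
  show _ᴴ = _
  unfold cdiag
  rw [conjTranspose_mul, conjTranspose_mul, hD, ← star_eq_conjTranspose,
    ← star_eq_conjTranspose, star_star, mul_assoc]

lemma cdiag_posSemidef (hA : A.IsHermitian) {g : Fin n → ℝ} (hg : ∀ i, 0 ≤ g i) :
    (cdiag hA g).PosSemidef := by
  unfold cdiag
  rw [star_eq_conjTranspose]
  exact (PosSemidef.diagonal (fun i => by simpa using hg i)).mul_mul_conjTranspose_same _

lemma cdiag_mulVec (hA : A.IsHermitian) (g : Fin n → ℝ) (i₀ : Fin n) (h : g i₀ = 0) :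
    ∃ v : Fin n → ℂ, v ≠ 0 ∧ cdiag hA g *ᵥ v = 0 := by
  set V := (hA.eigenvectorUnitary : Matrix (Fin n) (Fin n) ℂ) with hV
  refine ⟨V *ᵥ Pi.single i₀ 1, ?_, ?_⟩
  · intro hv
    have : star V *ᵥ (V *ᵥ Pi.single i₀ 1) = 0 := by rw [hv, mulVec_zero]
    rw [mulVec_mulVec, star_V_mul_V, one_mulVec] at this
    simpa using congrFun this i₀
  · rw [mulVec_mulVec]
    unfold cdiag
    rw [mul_assoc, mul_assoc, star_V_mul_V, mul_one, ← mulVec_mulVec]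
    rw [diagonal_mulVec_single]
    simp [h]

variable {n : ℕ}

open scoped MatrixOrder in
lemma psd_sqrt_aux {A : Matrix (Fin n) (Fin n) ℂ} (hA : A.PosSemidef) :
    ∃ S : Matrix (Fin n) (Fin n) ℂ, S.PosSemidef ∧ S * S = A :=
  ⟨CFC.sqrt A, Matrix.nonneg_iff_posSemidef.mp (CFC.sqrt_nonneg A),
    CFC.sqrt_mul_sqrt_self A (Matrix.nonneg_iff_posSemidef.mpr hA)⟩

lemma psd_trace_nonneg {X : Matrix (Fin n) (Fin n) ℂ} (hX : X.PosSemidef) : 0 ≤ X.trace := by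
  have h : ∀ i, 0 ≤ X i i := by
    intro i
    have := hX.dotProduct_mulVec_nonneg (Pi.single i 1)
    simpa [dotProduct, mulVec, Pi.single_apply, Finset.sum_ite_eq] using this
  exact Finset.sum_nonneg fun i _ => h i

lemma psd_trace_eq_zero {X : Matrix (Fin n) (Fin n) ℂ} (hX : X.PosSemidef)
    (h : X.trace = 0) : X = 0 := by
  obtain ⟨B, rfl⟩ : ∃ B : Matrix (Fin n) (Fin n) ℂ, X = Bᴴ * B := by
    obtain ⟨S, hS, hSS⟩ := psd_sqrt_aux hX; exact ⟨S, by rw [hS.1.eq, hSS]⟩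
  rw [Matrix.trace] at h
  have hterm : ∀ i j : Fin n, 0 ≤ star (B j i) * B j i := fun i j => star_mul_self_nonneg _
  have hdiag : ∀ i : Fin n, (Bᴴ * B).diag i = ∑ j, star (B j i) * B j i := by
    intro i
    simp [diag, Matrix.mul_apply, conjTranspose_apply]
  have hz : ∀ i ∈ Finset.univ, (Bᴴ * B).diag i = 0 := by
    rw [Finset.sum_eq_zero_iff_of_nonneg] at h
    · exact h
    · intro i _
      rw [hdiag]
      exact Finset.sum_nonneg fun j _ => hterm i j
  have hB : B = 0 := by
    ext j i
    have := hz i (Finset.mem_univ i)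
    rw [hdiag i] at this
    rw [Finset.sum_eq_zero_iff_of_nonneg (fun j _ => hterm i j)] at this
    have hb := this j (Finset.mem_univ j)
    rw [RCLike.star_def, mul_comm, Complex.mul_conj] at hb
    exact Complex.normSq_eq_zero.mp (by exact_mod_cast hb)
  rw [hB]
  simp

lemma psd_antisymm {X : Matrix (Fin n) (Fin n) ℂ} (hX : X.PosSemidef)
    (hX' : (-X).PosSemidef) : X = 0 := by
  apply psd_trace_eq_zero hX
  have h1 := psd_trace_nonneg hX
  have h2 := psd_trace_nonneg hX'
  rw [trace_neg] at h2
  exact le_antisymm (neg_nonneg.mp h2) h1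

lemma psd_smul {X : Matrix (Fin n) (Fin n) ℂ} (hX : X.PosSemidef) {r : ℝ} (hr : 0 ≤ r) :
    ((r : ℂ) • X).PosSemidef := by
  refine .of_dotProduct_mulVec_nonneg ?_ ?_
  · show _ᴴ = _
    rw [conjTranspose_smul, hX.1]
    congr 1
    simp [Complex.conj_ofReal]
  · intro x
    rw [smul_mulVec, dotProduct_smul]
    exact smul_nonneg (by simpa using hr) (hX.dotProduct_mulVec_nonneg x)

lemma psd_corner {A q : Matrix (Fin n) (Fin n) ℂ} (hA : A.PosSemidef)
    (hq : q.IsHermitian) (h : q * A * q = 0) : A * q = 0 ∧ q * A = 0 := by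
  obtain ⟨B, rfl⟩ : ∃ B : Matrix (Fin n) (Fin n) ℂ, A = Bᴴ * B := by
    obtain ⟨S, hS, hSS⟩ := psd_sqrt_aux hA; exact ⟨S, by rw [hS.1.eq, hSS]⟩
  have h1 : (B * q)ᴴ * (B * q) = 0 := by
    calc (B * q)ᴴ * (B * q) = q * (Bᴴ * B) * q := by
          rw [conjTranspose_mul, hq.eq]
          simp only [mul_assoc]
      _ = 0 := h
  have h2 : B * q = 0 := conjTranspose_mul_self_eq_zero.mp h1
  have h3 : Bᴴ * B * q = 0 := by rw [mul_assoc, h2, mul_zero]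
  refine ⟨h3, ?_⟩
  have h4 := congrArg conjTranspose h3
  rw [conjTranspose_mul, conjTranspose_mul, conjTranspose_conjTranspose, hq.eq,
    conjTranspose_zero] at h4
  exact h4

lemma herm_diff {H : Matrix (Fin n) (Fin n) ℂ} (hH : H.IsHermitian) :
    ∃ P Q : Matrix (Fin n) (Fin n) ℂ, P.PosSemidef ∧ Q.PosSemidef ∧ H = P - Q := by
  refine ⟨cdiag hH (fun i => max (hH.eigenvalues i) 0),
    cdiag hH (fun i => max (-hH.eigenvalues i) 0),
    cdiag_posSemidef hH (fun i => le_max_right _ _),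
    cdiag_posSemidef hH (fun i => le_max_right _ _), ?_⟩
  have hfg : (fun i => max (hH.eigenvalues i) 0) - (fun i => max (-hH.eigenvalues i) 0)
      = hH.eigenvalues := by
    funext i
    simp only [Pi.sub_apply]
    rcases le_total 0 (hH.eigenvalues i) with h | h
    · rw [max_eq_left h, max_eq_right (by linarith), sub_zero]
    · rw [max_eq_right h, max_eq_left (by linarith)]
      ring
  rw [cdiag_sub, hfg, cdiag_eigenvalues]

lemma decomp (X : Matrix (Fin n) (Fin n) ℂ) :
    ∃ P Q R S : Matrix (Fin n) (Fin n) ℂ,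
      P.PosSemidef ∧ Q.PosSemidef ∧ R.PosSemidef ∧ S.PosSemidef ∧
      X = P - Q + Complex.I • R - Complex.I • S ∧
      Xᴴ = P - Q - Complex.I • R + Complex.I • S := by
  have hH : ((1/2 : ℂ) • (X + Xᴴ)).IsHermitian := by
    show _ᴴ = _
    rw [conjTranspose_smul, conjTranspose_add, conjTranspose_conjTranspose]
    norm_num [add_comm]
  have hK : ((Complex.I/2) • (Xᴴ - X)).IsHermitian := by
    show _ᴴ = _
    rw [conjTranspose_smul, conjTranspose_sub, conjTranspose_conjTranspose]
    have hs : star (Complex.I / 2) = -(Complex.I/2) := by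
      norm_num [Complex.ext_iff]
    rw [hs, neg_smul, smul_sub, smul_sub]
    abel
  obtain ⟨P, Q, hP, hQ, hPQ⟩ := herm_diff hH
  obtain ⟨R, S, hR, hS, hRS⟩ := herm_diff hK
  refine ⟨P, Q, R, S, hP, hQ, hR, hS, ?_, ?_⟩
  · rw [add_sub_assoc, ← smul_sub, ← hRS, ← hPQ]
    match_scalars <;> simp [Complex.ext_iff] <;> norm_num
  · rw [sub_add, ← smul_sub, ← hRS, ← hPQ]
    match_scalars <;> simp [Complex.ext_iff] <;> norm_num

lemma psd_le_smul_one {Y : Matrix (Fin n) (Fin n) ℂ} (hY : Y.PosSemidef) :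
    ∃ t : ℝ, 0 ≤ t ∧ (((t : ℂ)) • 1 - Y).PosSemidef := by
  refine ⟨∑ i, hY.1.eigenvalues i, Finset.sum_nonneg fun i _ => hY.eigenvalues_nonneg i, ?_⟩
  have h1 : ((∑ i, hY.1.eigenvalues i : ℝ) : ℂ) • (1 : Matrix (Fin n) (Fin n) ℂ)
      = cdiag hY.1 (fun _ => ∑ i, hY.1.eigenvalues i) := by
    rw [← cdiag_one hY.1, cdiag_smul]
    have : (∑ i, hY.1.eigenvalues i) • (1 : Fin n → ℝ) = fun _ => ∑ i, hY.1.eigenvalues i := by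
      funext x
      simp
    rw [this]
  have h2 := cdiag_posSemidef hY.1 (g := fun i => (∑ j, hY.1.eigenvalues j) - hY.1.eigenvalues i)
    (fun i => by
      have : hY.1.eigenvalues i ≤ ∑ j, hY.1.eigenvalues j :=
        Finset.single_le_sum (fun j _ => hY.eigenvalues_nonneg j) (Finset.mem_univ i)
      simpa using this)
  have h3 : (fun i => (∑ j, hY.1.eigenvalues j) - hY.1.eigenvalues i)
      = (fun _ => ∑ j, hY.1.eigenvalues j) - hY.1.eigenvalues := rfl
  rw [h3, ← cdiag_sub, cdiag_eigenvalues, ← h1] at h2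
  exact h2

lemma fixed_posDef
    (Φ : Matrix (Fin n) (Fin n) ℂ →ₗ[ℂ] Matrix (Fin n) (Fin n) ℂ)
    (hΦpos : ∀ X : Matrix (Fin n) (Fin n) ℂ, X.PosSemidef → (Φ X).PosSemidef)
    (hΦirr : ∀ p : Matrix (Fin n) (Fin n) ℂ, p.IsHermitian → p * p = p →
      (∀ X : Matrix (Fin n) (Fin n) ℂ, Φ (p * X * p) = p * Φ (p * X * p) * p) → p = 0 ∨ p = 1)
    {ρ : Matrix (Fin n) (Fin n) ℂ} (hρ : ρ.PosSemidef) (hfix : Φ ρ = ρ) (hne : ρ ≠ 0) :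
    ρ.PosDef := by
  have hH : ρ.IsHermitian := hρ.1
  set ev : Fin n → ℝ := hH.eigenvalues with hev
  have hev0 : ∀ i, 0 ≤ ev i := hρ.eigenvalues_nonneg
  set d : Fin n → ℝ := fun i => if 0 < ev i then (1:ℝ) else 0 with hd
  set p := cdiag hH d with hp
  have hpH : p.IsHermitian := cdiag_isHermitian hH d
  have hdd : d * d = d := by
    funext i
    by_cases h : 0 < ev i <;> simp [hd, h]
  have hpp : p * p = p := by rw [hp, cdiag_mul, hdd]
  have hevd : ev * d = ev := by
    funext i
    by_cases h : 0 < ev i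
    · simp [hd, h]
    · have : ev i = 0 := le_antisymm (not_lt.mp h) (hev0 i)
      simp [hd, h, this]
  have hdev : d * ev = ev := by rw [mul_comm, hevd]
  have hρp : ρ * p = ρ := by
    have h1 := cdiag_mul hH ev d
    rw [hevd, cdiag_eigenvalues] at h1
    exact h1
  have hpρ : p * ρ = ρ := by
    have h1 := cdiag_mul hH d ev
    rw [hdev, cdiag_eigenvalues] at h1
    exact h1
  have hpρp : p * ρ * p = ρ := by rw [hpρ, hρp]
  have hex : ∃ i, 0 < ev i := by
    by_contra hcon
    push_neg at hcon
    have hev_eq : ev = 0 := funext fun i => le_antisymm (hcon i) (hev0 i)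
    have h1 := cdiag_eigenvalues hH
    rw [← hev, hev_eq, cdiag_zero] at h1
    exact hne h1.symm
  obtain ⟨i₀, hi₀⟩ := hex
  set T := Finset.univ.filter (fun i => 0 < ev i) with hT
  have hTne : T.Nonempty := ⟨i₀, Finset.mem_filter.mpr ⟨Finset.mem_univ _, hi₀⟩⟩
  set ε := T.inf' hTne ev with hεdef
  have hε : 0 < ε := by
    rw [hεdef, Finset.lt_inf'_iff]
    intro b hb
    exact (Finset.mem_filter.mp hb).2
  have hεle : ∀ i, 0 < ev i → ε ≤ ev i := fun i h =>
    Finset.inf'_le ev (Finset.mem_filter.mpr ⟨Finset.mem_univ _, h⟩)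
  have hgap : (ρ - (ε:ℂ) • p).PosSemidef := by
    have h1 := cdiag_posSemidef hH (g := ev - ε • d) (fun i => by
      simp only [Pi.sub_apply, Pi.smul_apply, smul_eq_mul]
      by_cases h : 0 < ev i
      · simp only [hd]
        rw [if_pos h]
        have := hεle i h
        linarith
      · have hz : ev i = 0 := le_antisymm (not_lt.mp h) (hev0 i)
        simp only [hd]
        rw [if_neg h]
        simp [hz])
    rw [← cdiag_sub, cdiag_eigenvalues, ← cdiag_smul] at h1
    exact h1
  -- the invariance property for PSD matrices
  have claim : ∀ Y : Matrix (Fin n) (Fin n) ℂ, Y.PosSemidef →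
      Φ (p * Y * p) = p * Φ (p * Y * p) * p := by
    intro Y hY
    obtain ⟨t, ht0, htY⟩ := psd_le_smul_one hY
    have hpYp : (p * Y * p).PosSemidef := by
      have h1 := hY.mul_mul_conjTranspose_same p
      rwa [hpH.eq] at h1
    have hA : (Φ (p * Y * p)).PosSemidef := hΦpos _ hpYp
    have key : (((t/ε : ℝ) : ℂ) • ρ - p * Y * p).PosSemidef := by
      have h1 : (((t/ε:ℝ):ℂ) • (ρ - (ε:ℂ) • p)).PosSemidef :=
        psd_smul hgap (div_nonneg ht0 hε.le)
      have h2 : (p * ((t:ℂ) • 1 - Y) * p).PosSemidef := by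
        have h2' := htY.mul_mul_conjTranspose_same p
        rwa [hpH.eq] at h2'
      have h3 := h1.add h2
      have e1 : p * ((t:ℂ) • 1 - Y) * p = (t:ℂ) • p - p * Y * p := by
        rw [mul_sub, sub_mul, mul_smul_comm, smul_mul_assoc, mul_one, hpp]
      have e2 : ((t/ε:ℝ):ℂ) • ((ε:ℂ) • p) = (t:ℂ) • p := by
        rw [smul_smul]
        congr 1
        push_cast
        field_simp
      have e3 : ((t/ε:ℝ):ℂ) • (ρ - (ε:ℂ) • p) + p * ((t:ℂ) • 1 - Y) * p
          = ((t/ε:ℝ):ℂ) • ρ - p * Y * p := by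
        rw [e1, smul_sub, e2]
        abel
      rwa [e3] at h3
    have h4 : (((t/ε:ℝ):ℂ) • ρ - Φ (p * Y * p)).PosSemidef := by
      have h4' := hΦpos _ key
      rwa [map_sub, LinearMap.map_smul, hfix] at h4'
    obtain ⟨q, hq⟩ : ∃ q : Matrix (Fin n) (Fin n) ℂ, q = 1 - p := ⟨_, rfl⟩
    have hqH : q.IsHermitian := by
      show _ᴴ = _
      rw [hq, conjTranspose_sub, conjTranspose_one, hpH.eq]
    have hρq : ρ * q = 0 := by rw [hq, mul_sub, mul_one, hρp, sub_self]
    have hqρ : q * ρ = 0 := by rw [hq, sub_mul, one_mul, hpρ, sub_self]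
    have h5 : (q * (((t/ε:ℝ):ℂ) • ρ - Φ (p * Y * p)) * q).PosSemidef := by
      have h5' := h4.mul_mul_conjTranspose_same q
      rwa [hqH.eq] at h5'
    have h6 : q * (((t/ε:ℝ):ℂ) • ρ - Φ (p * Y * p)) * q = -(q * Φ (p * Y * p) * q) := by
      have e : q * (((t/ε:ℝ):ℂ) • ρ - Φ (p * Y * p)) = -(q * Φ (p * Y * p)) := by
        rw [mul_sub, mul_smul_comm, hqρ, smul_zero, zero_sub]
      rw [e, neg_mul]
    have h7 : (q * Φ (p * Y * p) * q).PosSemidef := by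
      have h7' := hA.mul_mul_conjTranspose_same q
      rwa [hqH.eq] at h7'
    have h8 : q * Φ (p * Y * p) * q = 0 := by
      apply psd_antisymm h7
      rw [← h6]
      exact h5
    obtain ⟨hAq, hqA⟩ := psd_corner hA hqH h8
    have hp1 : p = 1 - q := by rw [hq, sub_sub_cancel]
    calc Φ (p * Y * p) = (1 - q) * Φ (p * Y * p) * (1 - q) := by
          rw [sub_mul, one_mul, hqA, sub_zero, mul_sub, mul_one, hAq, sub_zero]
      _ = p * Φ (p * Y * p) * p := by rw [← hp1]
  -- extend to all matrices by linearity
  have hinv : ∀ X : Matrix (Fin n) (Fin n) ℂ, Φ (p * X * p) = p * Φ (p * X * p) * p := by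
    intro X
    obtain ⟨P, Q, R, S, hP, hQ, hR, hS, hX1, -⟩ := decomp X
    have lin : ∀ (M N O L : Matrix (Fin n) (Fin n) ℂ),
        p * (M - N + Complex.I • O - Complex.I • L) * p
          = p * M * p - p * N * p + Complex.I • (p * O * p) - Complex.I • (p * L * p) := by
      intros M N O L
      simp only [mul_sub, sub_mul, mul_add, add_mul, mul_smul_comm, smul_mul_assoc]
    have expand : p * X * p = p * P * p - p * Q * p + Complex.I • (p * R * p)
        - Complex.I • (p * S * p) := by
      rw [hX1, lin]
    rw [expand, map_sub, map_add, map_sub, LinearMap.map_smul, LinearMap.map_smul, lin,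
      ← claim P hP, ← claim Q hQ, ← claim R hR, ← claim S hS]
  rcases hΦirr p hpH hpp hinv with h | h
  · exfalso
    rw [h] at hpρp
    simp at hpρp
    exact hne hpρp.symm
  · have h1 : ((ε:ℂ) • (1 : Matrix (Fin n) (Fin n) ℂ)).PosDef := by
      have hdiag : (ε:ℂ) • (1 : Matrix (Fin n) (Fin n) ℂ) = diagonal (fun _ => (ε:ℂ)) := by
        ext i j
        by_cases hij : i = j <;> simp [diagonal_apply, hij, Matrix.one_apply]
      rw [hdiag]
      exact (posDef_diagonal_iff).mpr fun i => by exact_mod_cast hε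
    rw [h] at hgap
    have h2 := h1.add_posSemidef hgap
    rwa [add_sub_cancel] at h2

lemma herm_fixed_eq_zero
    (Φ : Matrix (Fin n) (Fin n) ℂ →ₗ[ℂ] Matrix (Fin n) (Fin n) ℂ)
    (hΦpos : ∀ X : Matrix (Fin n) (Fin n) ℂ, X.PosSemidef → (Φ X).PosSemidef)
    (hΦirr : ∀ p : Matrix (Fin n) (Fin n) ℂ, p.IsHermitian → p * p = p →
      (∀ X : Matrix (Fin n) (Fin n) ℂ, Φ (p * X * p) = p * Φ (p * X * p) * p) → p = 0 ∨ p = 1)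
    {π : Matrix (Fin n) (Fin n) ℂ} (hπpos : π.PosSemidef) (hπtr : π.trace = 1)
    (hπinv : Φ π = π)
    {H : Matrix (Fin n) (Fin n) ℂ} (hH : H.IsHermitian) (hfix : Φ H = H)
    (htr : H.trace = 0) : H = 0 := by
  rcases Nat.eq_zero_or_pos n with hn | hn
  · ext i j
    exact absurd i.isLt (by omega)
  have hπne : π ≠ 0 := by
    intro h0
    rw [h0, trace_zero] at hπtr
    exact one_ne_zero hπtr.symm
  have hπPD : π.PosDef := fixed_posDef Φ hΦpos hΦirr hπpos hπinv hπne
  obtain ⟨S, hSps, hS2⟩ := psd_sqrt_aux hπpos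
  have hSH : S.IsHermitian := hSps.1
  have hdet : S.det ≠ 0 := by
    intro h0
    have h1 : π.det = 0 := by rw [← hS2, det_mul, h0, mul_zero]
    exact hπPD.det_pos.ne' h1
  have hSunit : IsUnit S.det := isUnit_iff_ne_zero.mpr hdet
  have hSS : S * S⁻¹ = 1 := mul_nonsing_inv S hSunit
  have hS'S : S⁻¹ * S = 1 := nonsing_inv_mul S hSunit
  have hS'H : (S⁻¹).IsHermitian := by
    show _ᴴ = _
    rw [conjTranspose_nonsing_inv, hSH.eq]
  have hB : (S⁻¹ * H * S⁻¹).IsHermitian := by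
    show _ᴴ = _
    rw [conjTranspose_mul, conjTranspose_mul, hS'H.eq, hH.eq, ← mul_assoc]
  obtain ⟨i₀, -, hmax⟩ := Finset.exists_max_image (Finset.univ : Finset (Fin n))
    hB.eigenvalues ⟨⟨0, hn⟩, Finset.mem_univ _⟩
  obtain ⟨lam, hlam⟩ : ∃ l : ℝ, l = hB.eigenvalues i₀ := ⟨_, rfl⟩
  have hDps : (cdiag hB (fun i => lam - hB.eigenvalues i)).PosSemidef :=
    cdiag_posSemidef hB (fun i => sub_nonneg.mpr (hlam ▸ hmax i (Finset.mem_univ i)))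
  have hsm1 : (lam:ℂ) • (1 : Matrix (Fin n) (Fin n) ℂ) = cdiag hB (fun _ => lam) := by
    rw [← cdiag_one hB, cdiag_smul]
    have : lam • (1 : Fin n → ℝ) = fun _ => lam := by
      funext x
      simp
    rw [this]
  have hDeq : (lam:ℂ) • (1 : Matrix (Fin n) (Fin n) ℂ) - S⁻¹ * H * S⁻¹
      = cdiag hB (fun i => lam - hB.eigenvalues i) := by
    have hfun : (fun i => lam - hB.eigenvalues i) = (fun _ => lam) - hB.eigenvalues := rfl
    calc (lam:ℂ) • (1 : Matrix (Fin n) (Fin n) ℂ) - S⁻¹ * H * S⁻¹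
        = cdiag hB (fun _ => lam) - cdiag hB hB.eigenvalues := by
          rw [hsm1, cdiag_eigenvalues]
      _ = cdiag hB (fun i => lam - hB.eigenvalues i) := by rw [cdiag_sub, hfun]
  obtain ⟨ρ, hρdef⟩ : ∃ ρ, ρ = (lam:ℂ) • π - H := ⟨_, rfl⟩
  have hρfix : Φ ρ = ρ := by rw [hρdef, map_sub, LinearMap.map_smul, hπinv, hfix]
  have e2 : S * (S⁻¹ * H * S⁻¹) * S = H := by
    calc S * (S⁻¹ * H * S⁻¹) * S = S * S⁻¹ * H * (S⁻¹ * S) := by simp only [mul_assoc]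
      _ = H := by rw [hSS, hS'S, one_mul, mul_one]
  have hρeq : ρ = S * cdiag hB (fun i => lam - hB.eigenvalues i) * S := by
    rw [← hDeq, mul_sub, sub_mul, mul_smul_comm, smul_mul_assoc, mul_one, hS2, e2, hρdef]
  have hρps : ρ.PosSemidef := by
    rw [hρeq]
    have h1 := hDps.mul_mul_conjTranspose_same S
    rwa [hSH.eq] at h1
  obtain ⟨v, hv0, hvk⟩ := cdiag_mulVec hB (fun i => lam - hB.eigenvalues i) i₀
    (by simp [hlam])
  have hw : ρ *ᵥ (S⁻¹ *ᵥ v) = 0 := by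
    calc ρ *ᵥ (S⁻¹ *ᵥ v)
        = (S * cdiag hB (fun i => lam - hB.eigenvalues i) * S * S⁻¹) *ᵥ v := by
          rw [hρeq, mulVec_mulVec]
      _ = (S * cdiag hB (fun i => lam - hB.eigenvalues i)) *ᵥ v := by
          rw [mul_assoc (S * _) S S⁻¹, hSS, mul_one]
      _ = S *ᵥ (cdiag hB (fun i => lam - hB.eigenvalues i) *ᵥ v) := (mulVec_mulVec _ _ _).symm
      _ = 0 := by rw [hvk, mulVec_zero]
  have hwne : S⁻¹ *ᵥ v ≠ 0 := by
    intro h0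
    apply hv0
    have h1 : S *ᵥ (S⁻¹ *ᵥ v) = 0 := by rw [h0, mulVec_zero]
    rwa [mulVec_mulVec, hSS, one_mulVec] at h1
  by_cases hρ0 : ρ = 0
  · rw [hρdef] at hρ0
    have hHlam : H = (lam:ℂ) • π := (sub_eq_zero.mp hρ0).symm
    have htr2 : (lam:ℂ) * π.trace = 0 := by
      rw [← smul_eq_mul, ← trace_smul, ← hHlam, htr]
    rw [hπtr, mul_one] at htr2
    rw [hHlam, htr2, zero_smul]
  · have hρPD := fixed_posDef Φ hΦpos hΦirr hρps hρfix hρ0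
    exfalso
    have h2 := hρPD.dotProduct_mulVec_pos hwne
    rw [hw] at h2
    simp at h2

lemma map_conjT (Φ : Matrix (Fin n) (Fin n) ℂ →ₗ[ℂ] Matrix (Fin n) (Fin n) ℂ)
    (hΦpos : ∀ X : Matrix (Fin n) (Fin n) ℂ, X.PosSemidef → (Φ X).PosSemidef)
    (X : Matrix (Fin n) (Fin n) ℂ) : Φ Xᴴ = (Φ X)ᴴ := by
  obtain ⟨P, Q, R, S, hP, hQ, hR, hS, hX1, hX2⟩ := decomp X
  rw [hX2, hX1]
  rw [map_add, map_sub, map_sub, LinearMap.map_smul, LinearMap.map_smul,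
    map_sub, map_add, map_sub, LinearMap.map_smul, LinearMap.map_smul]
  rw [conjTranspose_sub, conjTranspose_add, conjTranspose_sub, conjTranspose_smul,
    conjTranspose_smul, (hΦpos P hP).1.eq, (hΦpos Q hQ).1.eq, (hΦpos R hR).1.eq,
    (hΦpos S hS).1.eq, Complex.star_def, Complex.conj_I]
  simp only [neg_smul]
  abel

/-- For an irreducible, positive, trace preserving map `Φ` on `M_n(ℂ)` with
invariant state `π` and `Ω(X) = Tr(X)·π`, the map `I − Φ + Ω` is invertible. -/
theorem fundamental_map_exists {n : ℕ}
    (Φ Ω : Matrix (Fin n) (Fin n) ℂ →ₗ[ℂ] Matrix (Fin n) (Fin n) ℂ)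
    (π : Matrix (Fin n) (Fin n) ℂ)
    (hΦpos : ∀ X : Matrix (Fin n) (Fin n) ℂ, X.PosSemidef → (Φ X).PosSemidef)
    (hΦtr : ∀ X : Matrix (Fin n) (Fin n) ℂ, (Φ X).trace = X.trace)
    (hΦirr : ∀ p : Matrix (Fin n) (Fin n) ℂ, p.IsHermitian → p * p = p →
      (∀ X : Matrix (Fin n) (Fin n) ℂ, Φ (p * X * p) = p * Φ (p * X * p) * p) → p = 0 ∨ p = 1)
    (hπpos : π.PosSemidef) (hπtr : π.trace = 1) (hπinv : Φ π = π)
    (hΩ : ∀ X : Matrix (Fin n) (Fin n) ℂ, Ω X = X.trace • π) :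
    Function.Bijective ⇑(LinearMap.id - Φ + Ω :
      Matrix (Fin n) (Fin n) ℂ →ₗ[ℂ] Matrix (Fin n) (Fin n) ℂ) := by
  have hker : ∀ X : Matrix (Fin n) (Fin n) ℂ,
      X - Φ X + Ω X = 0 → X = 0 := by
    intro X hX
    rw [hΩ] at hX
    have htr : X.trace = 0 := by
      have h1 := congrArg Matrix.trace hX
      rwa [trace_add, trace_sub, hΦtr, trace_smul, hπtr, smul_eq_mul, mul_one, sub_self,
        zero_add, trace_zero] at h1
    rw [htr, zero_smul, add_zero, sub_eq_zero] at hX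
    have hXstar : Φ Xᴴ = Xᴴ := by rw [map_conjT Φ hΦpos X, ← hX]
    have hHH : (X + Xᴴ).IsHermitian := by
      show _ᴴ = _
      rw [conjTranspose_add, conjTranspose_conjTranspose, add_comm]
    have hHfix : Φ (X + Xᴴ) = X + Xᴴ := by rw [map_add, ← hX, hXstar]
    have hHtr : (X + Xᴴ).trace = 0 := by
      rw [trace_add, trace_conjTranspose, htr]
      simp
    have hKH : (Complex.I • (X - Xᴴ)).IsHermitian := by
      show _ᴴ = _
      rw [conjTranspose_smul, conjTranspose_sub, conjTranspose_conjTranspose,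
        Complex.star_def, Complex.conj_I, neg_smul, ← smul_neg, neg_sub]
    have hKfix : Φ (Complex.I • (X - Xᴴ)) = Complex.I • (X - Xᴴ) := by
      rw [LinearMap.map_smul, map_sub, ← hX, hXstar]
    have hKtr : (Complex.I • (X - Xᴴ)).trace = 0 := by
      rw [trace_smul, trace_sub, trace_conjTranspose, htr]
      simp
    have h1 := herm_fixed_eq_zero Φ hΦpos hΦirr hπpos hπtr hπinv hHH hHfix hHtr
    have h2 := herm_fixed_eq_zero Φ hΦpos hΦirr hπpos hπtr hπinv hKH hKfix hKtr
    have h3 : X - Xᴴ = 0 := by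
      rcases smul_eq_zero.mp h2 with h | h
      · exact absurd h Complex.I_ne_zero
      · exact h
    have h4 : (2:ℂ) • X = 0 := by
      calc (2:ℂ) • X = (X + Xᴴ) + (X - Xᴴ) := by
            rw [two_smul]
            abel
        _ = 0 := by rw [h1, h3, add_zero]
    rcases smul_eq_zero.mp h4 with h | h
    · norm_num at h
    · exact h
  have hinj : Function.Injective
      ⇑(LinearMap.id - Φ + Ω : Matrix (Fin n) (Fin n) ℂ →ₗ[ℂ] Matrix (Fin n) (Fin n) ℂ) := by
    intro a b hab
    simp only [LinearMap.add_apply, LinearMap.sub_apply, LinearMap.id_apply] at hab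
    have h1 : (a - b) - Φ (a - b) + Ω (a - b) = 0 := by
      rw [map_sub, map_sub]
      have e : a - b - (Φ a - Φ b) + (Ω a - Ω b) = (a - Φ a + Ω a) - (b - Φ b + Ω b) := by abel
      rw [e, hab, sub_self]
    exact sub_eq_zero.mp (hker _ h1)
  exact ⟨hinj, LinearMap.injective_iff_surjective.mp hinj⟩
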